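/- Let C be a finite set of m candidates, N = {1,…,n} voters with rank functions rank_i : C → {1,…,m} forming a single-peaked profile (there is a linear order ◁ on C such that every set {c : rank_i(c) ≤ r} is an interval of ◁), let k ≤ m, let α_1 ≥ … ≥ α_k ≥ 0 and w_1 ≥ … ≥ w_m ≥ 0 be rationals, and set w'_r = w_r − w_{r+1} for r < m and w'_m = w_m. Then the supremum of ∑_{i∈N} ∑_{ℓ=1}^{k} ∑_{r=1}^{m} α_ℓ·w'_r·x_{i,ℓ,r} over all rational y ∈ [0,1]^C and x ∈ [0,1]^{N×{1,…,k}×{1,…,m}} with ∑_{c∈C} y_c = k and ∑_{ℓ=1}^{k} x_{i,ℓ,r} ≤ ∑_{c : rank_i(c) ≤ r} y_c for all i, r, is attained by an integral solution; in particular it equals the maximum OWA value over committees W ⊆ C with |W| = k. -/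

import Mathlib

namespace Stmt13Aux

/-- clamp to [0,1] -/
def clampQ (t : ℚ) : ℚ := min 1 (max 0 t)

lemma clampQ_nonneg (t : ℚ) : 0 ≤ clampQ t := le_min one_pos.le (le_max_left _ _)

lemma clampQ_le_one (t : ℚ) : clampQ t ≤ 1 := min_le_left _ _

lemma clampQ_of_nonpos {t : ℚ} (h : t ≤ 0) : clampQ t = 0 := by
  simp [clampQ, max_eq_left h, min_eq_right zero_le_one]

lemma clampQ_of_one_le {t : ℚ} (h : 1 ≤ t) : clampQ t = 1 := by
  have : (0:ℚ) ≤ t := le_trans zero_le_one h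
  simp [clampQ, max_eq_right this, min_eq_left h]

lemma clampQ_of_mem {t : ℚ} (h0 : 0 ≤ t) (h1 : t ≤ 1) : clampQ t = t := by
  simp [clampQ, max_eq_right h0, min_eq_right h1]

lemma clampQ_nat (c j : ℕ) : clampQ ((c:ℚ) - (j:ℚ)) = if j < c then 1 else 0 := by
  split
  · next h => exact clampQ_of_one_le (by
      have : (j:ℚ) + 1 ≤ c := by exact_mod_cast Nat.succ_le_of_lt h
      linarith)
  · next h =>
    exact clampQ_of_nonpos (by
      have : (c:ℚ) ≤ j := by exact_mod_cast Nat.le_of_not_lt h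
      linarith)

/-- sum of clamps is `min p t` -/
lemma sum_clampQ (t : ℚ) (ht : 0 ≤ t) (p : ℕ) :
    ∑ j ∈ Finset.range p, clampQ (t - j) = min (p:ℚ) t := by
  induction p with
  | zero => simp [min_eq_left ht]
  | succ p ih =>
    rw [Finset.sum_range_succ, ih]
    rcases le_or_gt t p with h | h
    · rw [clampQ_of_nonpos (by linarith), min_eq_right h, min_eq_right (by push_cast; linarith)]
      ring
    · rw [min_eq_left h.le]
      rcases le_or_gt ((p:ℚ)+1) t with h2 | h2
      · rw [clampQ_of_one_le (by linarith), min_eq_left (by push_cast; linarith)]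
        push_cast; ring
      · rw [clampQ_of_mem (by linarith) (by linarith), min_eq_right (by push_cast; linarith)]
        push_cast; ring

end Stmt13Aux

namespace Stmt13Aux

lemma sum_ext_eq {k : ℕ} (f : Fin k → ℚ) :
    ∑ j ∈ Finset.range k, (if h : j < k then f ⟨j, h⟩ else 0) = ∑ ℓ, f ℓ := by
  rw [← Fin.sum_univ_eq_sum_range (fun j => if h : j < k then f ⟨j, h⟩ else 0) k]
  exact Finset.sum_congr rfl fun j _ => by simp [j.isLt]

/-- greedy bound -/
lemma greedy_bound {k : ℕ} (α : Fin k → ℚ) (hmono : ∀ i j : Fin k, i ≤ j → α j ≤ α i)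
    (hnn : ∀ ℓ, 0 ≤ α ℓ) (x : Fin k → ℚ) (hx : ∀ ℓ, 0 ≤ x ℓ ∧ x ℓ ≤ 1)
    (t : ℚ) (ht : ∑ ℓ, x ℓ ≤ t) :
    ∑ ℓ, α ℓ * x ℓ ≤ ∑ ℓ : Fin k, α ℓ * clampQ (t - (ℓ:ℕ)) := by
  rcases Nat.eq_zero_or_pos k with hk | hk
  · subst hk; simp
  have ht0 : 0 ≤ t := le_trans (Finset.sum_nonneg fun ℓ _ => (hx ℓ).1) ht
  set αe : ℕ → ℚ := fun j => if h : j < k then α ⟨j, h⟩ else 0 with hαe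
  set xe : ℕ → ℚ := fun j => if h : j < k then x ⟨j, h⟩ else 0 with hxe
  set d : ℕ → ℚ := fun j => xe j - clampQ (t - j) with hd
  have hxe0 : ∀ j, 0 ≤ xe j := by
    intro j; by_cases h : j < k
    · simpa [hxe, h] using (hx ⟨j, h⟩).1
    · simp [hxe, h]
  have hxe1 : ∀ j, xe j ≤ 1 := by
    intro j; by_cases h : j < k
    · simpa [hxe, h] using (hx ⟨j, h⟩).2
    · simp [hxe, h]
  have hpartial : ∀ p, p ≤ k → ∑ j ∈ Finset.range p, d j ≤ 0 := by
    intro p hp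
    have h1 : ∑ j ∈ Finset.range p, xe j ≤ min (p:ℚ) t := by
      apply le_min
      · calc ∑ j ∈ Finset.range p, xe j ≤ ∑ _j ∈ Finset.range p, (1:ℚ) :=
              Finset.sum_le_sum fun j _ => hxe1 j
          _ = p := by simp
      · calc ∑ j ∈ Finset.range p, xe j ≤ ∑ j ∈ Finset.range k, xe j :=
              Finset.sum_le_sum_of_subset_of_nonneg (Finset.range_subset_range.2 hp)
                (fun j _ _ => hxe0 j)
          _ = ∑ ℓ, x ℓ := sum_ext_eq x
          _ ≤ t := ht
    have h2 : ∑ j ∈ Finset.range p, clampQ (t - j) = min (p:ℚ) t := sum_clampQ t ht0 p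
    rw [hd]
    simp only [Finset.sum_sub_distrib]
    rw [h2]; linarith
  have key : ∑ j ∈ Finset.range k, αe j * d j ≤ 0 := by
    have := Finset.sum_range_by_parts (M := ℚ) αe d k
    simp only [smul_eq_mul] at this
    rw [this]
    have hterm1 : αe (k-1) * ∑ j ∈ Finset.range k, d j ≤ 0 := by
      apply mul_nonpos_of_nonneg_of_nonpos
      · by_cases h : k - 1 < k
        · simpa [hαe, h] using hnn ⟨k-1, h⟩
        · omega
      · exact hpartial k le_rfl
    have hterm2 : 0 ≤ ∑ j ∈ Finset.range (k-1), (αe (j+1) - αe j) * ∑ i ∈ Finset.range (j+1), d i := by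
      apply Finset.sum_nonneg
      intro j hj
      rw [Finset.mem_range] at hj
      have hj1 : j + 1 < k := by omega
      have hjk : j < k := by omega
      have hc : αe (j+1) - αe j ≤ 0 := by
        have : α ⟨j+1, hj1⟩ ≤ α ⟨j, hjk⟩ := hmono _ _ (by simp [Fin.le_def])
        simp only [hαe, dif_pos hj1, dif_pos hjk]
        linarith
      have hs : ∑ i ∈ Finset.range (j+1), d i ≤ 0 := hpartial (j+1) (by omega)
      nlinarith
    linarith
  have hL : ∑ j ∈ Finset.range k, αe j * xe j = ∑ ℓ, α ℓ * x ℓ := by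
    rw [← sum_ext_eq (fun ℓ => α ℓ * x ℓ)]
    apply Finset.sum_congr rfl
    intro j hj
    rw [Finset.mem_range] at hj
    simp [hαe, hxe, hj]
  have hR : ∑ j ∈ Finset.range k, αe j * clampQ (t - j) = ∑ ℓ : Fin k, α ℓ * clampQ (t - (ℓ:ℕ)) := by
    rw [← sum_ext_eq (fun ℓ : Fin k => α ℓ * clampQ (t - (ℓ:ℕ)))]
    apply Finset.sum_congr rfl
    intro j hj
    rw [Finset.mem_range] at hj
    simp [hαe, hj]
  have : ∑ j ∈ Finset.range k, αe j * d j
      = ∑ j ∈ Finset.range k, αe j * xe j - ∑ j ∈ Finset.range k, αe j * clampQ (t - j) := by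
    rw [← Finset.sum_sub_distrib]
    exact Finset.sum_congr rfl fun j _ => by rw [hd]; ring
  rw [this, hL, hR] at key
  linarith
/-- clampQ (· - ℓ) is affine on [f, f+1] for integers f, ℓ. -/
lemma clampQ_affine (f ℓ : ℤ) : ∃ A B : ℚ, ∀ s : ℚ, (f:ℚ) ≤ s → s ≤ (f:ℚ)+1 →
    clampQ (s - (ℓ:ℚ)) = A + B * s := by
  rcases lt_trichotomy ℓ f with h | h | h
  · refine ⟨1, 0, fun s hs1 hs2 => ?_⟩
    rw [clampQ_of_one_le ?_]
    · ring
    · have : (ℓ:ℚ) + 1 ≤ f := by exact_mod_cast Int.add_one_le_of_lt h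
      linarith
  · subst h
    refine ⟨-(ℓ:ℚ), 1, fun s hs1 hs2 => ?_⟩
    rw [clampQ_of_mem (by linarith) (by linarith)]
    ring
  · refine ⟨0, 0, fun s hs1 hs2 => ?_⟩
    rw [clampQ_of_nonpos ?_]
    · ring
    · have : (f:ℚ) + 1 ≤ ℓ := by exact_mod_cast Int.add_one_le_of_lt h
      linarith

lemma int_div_sum (D : ℕ) (hD : 0 < D) : ∀ e : ℕ,
    ∑ j ∈ Finset.range D, (((e:ℤ) + (j:ℤ)) / (D:ℤ)) = e := by
  intro e
  induction e with
  | zero =>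
    apply Finset.sum_eq_zero
    intro j hj
    rw [Finset.mem_range] at hj
    simpa using Int.ediv_eq_zero_of_lt (by positivity) (by exact_mod_cast hj)
  | succ e ih =>
    have h1 : ∀ j : ℕ, ((e:ℤ) + 1 + (j:ℤ)) / (D:ℤ) = ((e:ℤ) + ((j:ℕ)+1 : ℕ)) / (D:ℤ) := by
      intro j; push_cast; ring_nf
    calc ∑ j ∈ Finset.range D, (((e:ℤ)+1+(j:ℤ))/(D:ℤ))
        = ∑ j ∈ Finset.range D, (fun j : ℕ => ((e:ℤ) + (j:ℤ)) / (D:ℤ)) (j+1) := by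
          apply Finset.sum_congr rfl; intro j _
          push_cast; ring_nf
      _ = (∑ j ∈ Finset.range (D+1), ((e:ℤ) + (j:ℤ)) / (D:ℤ)) - ((e:ℤ) + 0) / (D:ℤ) := by
          rw [Finset.sum_range_succ' (fun j : ℕ => ((e:ℤ) + (j:ℤ)) / (D:ℤ)) D]
          push_cast
          ring
      _ = (∑ j ∈ Finset.range D, ((e:ℤ) + (j:ℤ)) / (D:ℤ)) + ((e:ℤ) + (D:ℤ)) / (D:ℤ)
            - (e:ℤ) / (D:ℤ) := by
          rw [Finset.sum_range_succ]
          push_cast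
          ring
      _ = (e:ℤ) + 1 := by
          have : ((e:ℤ) + (D:ℤ)) / (D:ℤ) = (e:ℤ)/(D:ℤ) + 1 := by
            have := Int.add_mul_ediv_right (e:ℤ) 1 (c := (D:ℤ)) (by exact_mod_cast hD.ne')
            simpa using this
          rw [ih, this]
          push_cast
          ring

/-- average of the rounding counts: `∑_{t<D} ⌊s + 1 - (t+1)/D⌋ = D s` when `D s = e ∈ ℕ`. -/
lemma floor_avg (D : ℕ) (hD : 0 < D) (s : ℚ) (e : ℕ) (he : ((e:ℚ)) = (D:ℚ) * s) :
    ∑ t ∈ Finset.range D, ⌊s + 1 - ((t:ℚ)+1)/(D:ℚ)⌋ = (e:ℤ) := by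
  have hDQ : (0:ℚ) < (D:ℚ) := by exact_mod_cast hD
  have hterm : ∀ t : ℕ, t < D → ⌊s + 1 - ((t:ℚ)+1)/(D:ℚ)⌋ = ((e:ℤ) + ((D - 1 - t : ℕ):ℤ)) / (D:ℤ) := by
    intro t ht
    have hcast : ((D - 1 - t : ℕ):ℚ) = (D:ℚ) - (1 + t) := by
      rw [show D - 1 - t = D - (1 + t) from by omega, Nat.cast_sub (by omega)]
      push_cast; ring
    have hs : s + 1 - ((t:ℚ)+1)/(D:ℚ) = (((e:ℤ) + ((D - 1 - t : ℕ):ℤ)):ℚ) / ((D:ℕ):ℚ) := by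
      push_cast [hcast]
      field_simp
      linarith [he]
    rw [hs]
    exact_mod_cast Rat.floor_intCast_div_natCast ((e:ℤ) + ((D - 1 - t : ℕ):ℤ)) D
  rw [Finset.sum_congr rfl (fun t ht => hterm t (Finset.mem_range.1 ht))]
  calc ∑ t ∈ Finset.range D, ((e:ℤ) + ((D - 1 - t : ℕ):ℤ)) / (D:ℤ)
      = ∑ j ∈ Finset.range D, ((e:ℤ) + (j:ℤ)) / (D:ℤ) :=
        Finset.sum_range_reflect (fun j : ℕ => ((e:ℤ) + (j:ℤ)) / (D:ℤ)) D
    _ = e := int_div_sum D hD e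

/-- downward closed subsets of `Fin k` are initial segments -/
lemma mem_iff_lt_card_of_dc {k : ℕ} (S : Finset (Fin k))
    (hdc : ∀ a b : Fin k, a ≤ b → b ∈ S → a ∈ S) (ℓ : Fin k) :
    ℓ ∈ S ↔ (ℓ:ℕ) < S.card := by
  constructor
  · intro hℓ
    have hsub : Finset.Iic ℓ ⊆ S := fun a ha => hdc a ℓ (Finset.mem_Iic.1 ha) hℓ
    have := Finset.card_le_card hsub
    rw [Fin.card_Iic] at this
    omega
  · intro hcard
    by_contra hℓ
    have hsub : S ⊆ Finset.Iio ℓ := by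
      intro a ha
      rw [Finset.mem_Iio]
      by_contra hla
      exact hℓ (hdc ℓ a (not_lt.1 hla) ha)
    have := Finset.card_le_card hsub
    rw [Fin.card_Iio] at this
    omega

/-- monotone enumeration of a multiset of given size -/
lemma exists_mono_enum {m k : ℕ} (M : Multiset (Fin m)) (hM : Multiset.card M = k) :
    ∃ ρ : Fin k → Fin m, Monotone ρ ∧ (Finset.univ : Finset (Fin k)).val.map ρ = M := by
  set l := M.sort (· ≤ ·) with hl
  have hlen : l.length = k := by rw [hl, Multiset.length_sort]; exact hM
  have hsorted : l.Pairwise (· ≤ ·) := Multiset.pairwise_sort M _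
  refine ⟨fun ℓ => l.get (Fin.cast hlen.symm ℓ), ?_, ?_⟩
  · intro a b hab
    exact hsorted.rel_get_of_le hab
  · rw [Fin.univ_val_map]
    have : List.ofFn (fun ℓ : Fin k => l.get (Fin.cast hlen.symm ℓ)) = l := by
      apply List.ext_get
      · simp [hlen]
      · intro i h1 h2
        simp only [List.get_ofFn]
        congr 1
    rw [this, hl, Multiset.sort_eq]

/-- telescoping: `w ρ = ∑_{r ≥ ρ} w' r`. -/
lemma telescope {m : ℕ} (w w' : Fin m → ℚ)
    (hw' : ∀ r : Fin m, w' r = w r - (if h : (r : ℕ) + 1 < m then w ⟨(r : ℕ) + 1, h⟩ else 0))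
    (ρ : Fin m) :
    ∑ r : Fin m, (if ρ ≤ r then w' r else 0) = w ρ := by
  set we : ℕ → ℚ := fun j => if h : j < m then w ⟨j, h⟩ else 0 with hwe
  set w'e : ℕ → ℚ := fun j => if h : j < m then w' ⟨j, h⟩ else 0 with hw'e
  have hdiff : ∀ j, w'e j = we j - we (j+1) := by
    intro j
    by_cases h : j < m
    · simp only [hw'e, hwe, dif_pos h]
      rw [hw' ⟨j, h⟩]
    · have h2 : ¬ (j + 1 < m) := by omega
      simp [hw'e, hwe, dif_neg h, dif_neg h2]
  have step1 : ∑ r : Fin m, (if ρ ≤ r then w' r else 0)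
      = ∑ j ∈ Finset.range m, (if h : j < m then (if ρ ≤ (⟨j, h⟩ : Fin m) then w' ⟨j, h⟩ else 0) else 0) :=
    (sum_ext_eq (fun r : Fin m => if ρ ≤ r then w' r else 0)).symm
  have step2 : ∑ j ∈ Finset.range m, (if h : j < m then (if ρ ≤ (⟨j, h⟩ : Fin m) then w' ⟨j, h⟩ else 0) else 0)
      = ∑ j ∈ Finset.Ico (ρ:ℕ) m, w'e j := by
    have e1 : ∀ j ∈ Finset.range m, (if h : j < m then (if ρ ≤ (⟨j, h⟩ : Fin m) then w' ⟨j, h⟩ else 0) else 0)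
        = (if (ρ:ℕ) ≤ j then w'e j else 0) := by
      intro j hj
      rw [Finset.mem_range] at hj
      simp only [dif_pos hj, hw'e]
      by_cases h2 : (ρ:ℕ) ≤ j
      · rw [if_pos h2, if_pos (show ρ ≤ (⟨j, hj⟩ : Fin m) from h2)]
      · rw [if_neg h2, if_neg (show ¬ ρ ≤ (⟨j, hj⟩ : Fin m) from h2)]
    rw [Finset.sum_congr rfl e1, ← Finset.sum_filter]
    apply Finset.sum_congr _ (fun _ _ => rfl)
    ext j
    simp only [Finset.mem_filter, Finset.mem_range, Finset.mem_Ico]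
    omega
  have step3 : ∑ j ∈ Finset.Ico (ρ:ℕ) m, w'e j = we ρ := by
    rw [Finset.sum_Ico_eq_sum_range]
    have : ∀ t, w'e ((ρ:ℕ) + t) = we ((ρ:ℕ) + t) - we ((ρ:ℕ) + (t+1)) := by
      intro t
      rw [hdiff ((ρ:ℕ) + t)]
      ring_nf
    rw [Finset.sum_congr rfl (fun t _ => this t)]
    rw [Finset.sum_range_sub' (fun t => we ((ρ:ℕ) + t)) (m - (ρ:ℕ))]
    have h1 : (ρ:ℕ) + (m - (ρ:ℕ)) = m := by omega
    have h2 : we m = 0 := by simp [hwe]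
    rw [h1, h2]
    simp [hwe, ρ.isLt]
  rw [step1, step2, step3]
  simp [hwe, ρ.isLt]

lemma indicator_eq_clamp {k m : ℕ} (ρi : Fin k → Fin m) (hmono : Monotone ρi) (r : Fin m)
    (ℓ : Fin k) :
    (if ρi ℓ ≤ r then (1:ℚ) else 0)
      = clampQ (((Finset.univ.filter (fun j => ρi j ≤ r)).card : ℚ) - ((ℓ:ℕ):ℚ)) := by
  rw [clampQ_nat]
  refine if_congr ?_ rfl rfl
  rw [← mem_iff_lt_card_of_dc (Finset.univ.filter (fun j => ρi j ≤ r))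
      (fun a b hab hb => ?_) ℓ]
  · simp
  · simp only [Finset.mem_filter, Finset.mem_univ, true_and] at hb ⊢
    exact le_trans (hmono hab) hb

lemma card_filter_map_eq {m k : ℕ} (W : Finset (Fin m)) (f : Fin m → Fin m)
    (ρi : Fin k → Fin m) (h : W.val.map f = (Finset.univ : Finset (Fin k)).val.map ρi)
    (r : Fin m) :
    (W.filter (fun c => f c ≤ r)).card = (Finset.univ.filter (fun j => ρi j ≤ r)).card := by
  have h1 : ∀ (km : ℕ) (s : Finset (Fin km)) (g : Fin km → Fin m),
      ((s.filter (fun c => g c ≤ r)).card : ℕ)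
      = Multiset.countP (fun v => v ≤ r) (s.val.map g) := by
    intro km s g
    rw [Finset.card_def, Finset.filter_val, ← Multiset.countP_eq_card_filter,
      Multiset.countP_map]
    exact Multiset.countP_eq_card_filter _ _
  rw [h1 m W f, h1 k Finset.univ ρi, h]

/-- OWA value of a voter as weighted sum of `g` of counts -/
lemma owa_eq_sum_g {m k : ℕ} (α : Fin k → ℚ) (w w' : Fin m → ℚ)
    (hw' : ∀ r : Fin m, w' r = w r - (if h : (r : ℕ) + 1 < m then w ⟨(r : ℕ) + 1, h⟩ else 0))
    (ρi : Fin k → Fin m) (hmono : Monotone ρi) :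
    ∑ ℓ, α ℓ * w (ρi ℓ)
      = ∑ r : Fin m, w' r * ∑ ℓ, α ℓ *
          clampQ (((Finset.univ.filter (fun j => ρi j ≤ r)).card : ℚ) - ((ℓ:ℕ):ℚ)) := by
  calc ∑ ℓ, α ℓ * w (ρi ℓ)
      = ∑ ℓ, α ℓ * ∑ r : Fin m, (if ρi ℓ ≤ r then w' r else 0) := by
        exact Finset.sum_congr rfl fun ℓ _ => by rw [telescope w w' hw' (ρi ℓ)]
    _ = ∑ ℓ, ∑ r : Fin m, w' r * (α ℓ * (if ρi ℓ ≤ r then (1:ℚ) else 0)) := by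
        apply Finset.sum_congr rfl; intro ℓ _
        rw [Finset.mul_sum]
        apply Finset.sum_congr rfl; intro r _
        by_cases h : ρi ℓ ≤ r <;> simp [h] <;> ring
    _ = ∑ r : Fin m, ∑ ℓ, w' r * (α ℓ * (if ρi ℓ ≤ r then (1:ℚ) else 0)) := Finset.sum_comm
    _ = _ := by
        apply Finset.sum_congr rfl; intro r _
        rw [Finset.mul_sum]
        apply Finset.sum_congr rfl; intro ℓ _
        rw [indicator_eq_clamp ρi hmono r ℓ]

end Stmt13Aux

open Stmt13Aux in
/-- For a single-peaked profile of rank functions, the LP relaxation of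
(OWA-IP) has an optimal solution that is integral; in particular its
optimal value equals the maximum OWA value over committees `W` of size `k`,
where the value of `W` is `∑_i ∑_ℓ α_ℓ · w (ρ i ℓ)` with `ρ i` enumerating
the multiset of ranks `{rank i c : c ∈ W}` in non-decreasing order. -/
theorem stmt13 {n m k : ℕ} (hk : k ≤ m)
    (rank : Fin n → Fin m → Fin m)
    (hSP : ∃ pos : Equiv.Perm (Fin m), ∀ (i : Fin n) (r : Fin m) (a b c : Fin m),
      pos a < pos b → pos b < pos c →
      rank i a ≤ r → rank i c ≤ r → rank i b ≤ r)
    (α : Fin k → ℚ) (hαmono : ∀ i j : Fin k, i ≤ j → α j ≤ α i)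
    (hαnonneg : ∀ ℓ, 0 ≤ α ℓ)
    (w : Fin m → ℚ) (hwmono : ∀ r s : Fin m, r ≤ s → w s ≤ w r)
    (hwnonneg : ∀ r, 0 ≤ w r)
    (w' : Fin m → ℚ)
    (hw' : ∀ r : Fin m,
      w' r = w r - (if h : (r : ℕ) + 1 < m then w ⟨(r : ℕ) + 1, h⟩ else 0)) :
    ∃ q : ℚ,
      IsGreatest {val : ℚ | ∃ (y : Fin m → ℚ) (x : Fin n → Fin k → Fin m → ℚ),
        (∀ c, 0 ≤ y c ∧ y c ≤ 1) ∧
        (∀ i ℓ r, 0 ≤ x i ℓ r ∧ x i ℓ r ≤ 1) ∧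
        (∑ c, y c) = (k : ℚ) ∧
        (∀ i r, (∑ ℓ, x i ℓ r) ≤
          ∑ c ∈ Finset.univ.filter (fun c => rank i c ≤ r), y c) ∧
        val = ∑ i, ∑ ℓ, ∑ r, α ℓ * w' r * x i ℓ r} q ∧
      (∃ (y : Fin m → ℚ) (x : Fin n → Fin k → Fin m → ℚ),
        (∀ c, y c = 0 ∨ y c = 1) ∧
        (∀ i ℓ r, x i ℓ r = 0 ∨ x i ℓ r = 1) ∧
        (∑ c, y c) = (k : ℚ) ∧
        (∀ i r, (∑ ℓ, x i ℓ r) ≤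
          ∑ c ∈ Finset.univ.filter (fun c => rank i c ≤ r), y c) ∧
        q = ∑ i, ∑ ℓ, ∑ r, α ℓ * w' r * x i ℓ r) ∧
      IsGreatest {val : ℚ | ∃ (W : Finset (Fin m)) (ρ : Fin n → Fin k → Fin m),
        W.card = k ∧
        (∀ i, Monotone (ρ i)) ∧
        (∀ i, W.val.map (rank i) = (Finset.univ : Finset (Fin k)).val.map (ρ i)) ∧
        val = ∑ i, ∑ ℓ, α ℓ * w (ρ i ℓ)} q := by
  classical
  obtain ⟨pos, hpos⟩ := hSP
  set Bset : Set ℚ := {val : ℚ | ∃ (W : Finset (Fin m)) (ρ : Fin n → Fin k → Fin m),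
        W.card = k ∧
        (∀ i, Monotone (ρ i)) ∧
        (∀ i, W.val.map (rank i) = (Finset.univ : Finset (Fin k)).val.map (ρ i)) ∧
        val = ∑ i, ∑ ℓ, α ℓ * w (ρ i ℓ)} with hBset
  -- enumeration of a committee
  have hBstruct : ∀ W : Finset (Fin m), W.card = k →
      ∃ ρ : Fin n → Fin k → Fin m, (∀ i, Monotone (ρ i)) ∧
        (∀ i, W.val.map (rank i) = (Finset.univ : Finset (Fin k)).val.map (ρ i)) := by
    intro W hW
    choose ρ h1 h2 using fun i => exists_mono_enum (k := k) (W.val.map (rank i))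
      (by rw [Multiset.card_map]; exact hW)
    exact ⟨ρ, h1, fun i => (h2 i).symm⟩
  have hBne : Bset.Nonempty := by
    obtain ⟨W, -, hW⟩ := Finset.exists_subset_card_eq
      (show k ≤ (Finset.univ : Finset (Fin m)).card by simpa using hk)
    obtain ⟨ρ, h1, h2⟩ := hBstruct W hW
    exact ⟨_, W, ρ, hW, h1, h2, rfl⟩
  have hBfin : Bset.Finite := by
    apply Set.Finite.subset (Set.finite_range
      (fun p : Finset (Fin m) × (Fin n → Fin k → Fin m) => ∑ i, ∑ ℓ, α ℓ * w (p.2 i ℓ)))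
    rintro v ⟨W, ρ, -, -, -, hv⟩
    exact ⟨(W, ρ), hv.symm⟩
  obtain ⟨q, hqmem, hqub⟩ : ∃ q ∈ Bset, ∀ v ∈ Bset, v ≤ q := by
    obtain ⟨q, hq1, hq2⟩ := hBfin.toFinset.exists_max_image id
      (by simpa using hBne)
    exact ⟨q, by simpa using hq1, fun v hv => hq2 v (by simpa using hv)⟩
  -- committee value via clamp counts
  have commit : ∀ (W : Finset (Fin m)) (ρ : Fin n → Fin k → Fin m),
      (∀ i, Monotone (ρ i)) →
      (∀ i, W.val.map (rank i) = (Finset.univ : Finset (Fin k)).val.map (ρ i)) →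
      (∑ i, ∑ ℓ, α ℓ * w (ρ i ℓ)) = ∑ i, ∑ r : Fin m, w' r *
        ∑ ℓ, α ℓ * clampQ (((W.filter (fun c => rank i c ≤ r)).card : ℚ) - ((ℓ:ℕ):ℚ)) := by
    intro W ρ h1 h2
    apply Finset.sum_congr rfl
    intro i _
    rw [owa_eq_sum_g α w w' hw' (ρ i) (h1 i)]
    apply Finset.sum_congr rfl
    intro r _
    rw [card_filter_map_eq W (rank i) (ρ i) (h2 i) r]
  -- the integral solution coming from a committee
  have hqint : ∃ (y : Fin m → ℚ) (x : Fin n → Fin k → Fin m → ℚ),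
      (∀ c, y c = 0 ∨ y c = 1) ∧
      (∀ i ℓ r, x i ℓ r = 0 ∨ x i ℓ r = 1) ∧
      (∑ c, y c) = (k : ℚ) ∧
      (∀ i r, (∑ ℓ, x i ℓ r) ≤
        ∑ c ∈ Finset.univ.filter (fun c => rank i c ≤ r), y c) ∧
      q = ∑ i, ∑ ℓ, ∑ r, α ℓ * w' r * x i ℓ r := by
    obtain ⟨W, ρ, hWc, hρmono, hρmap, hqval⟩ := hqmem
    refine ⟨fun c => if c ∈ W then 1 else 0, fun i ℓ r => if ρ i ℓ ≤ r then 1 else 0,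
      fun c => by by_cases h : c ∈ W <;> simp [h],
      fun i ℓ r => by by_cases h : ρ i ℓ ≤ r <;> simp [h], ?_, ?_, ?_⟩
    · rw [Finset.sum_ite_mem]
      simp [Finset.univ_inter, hWc]
    · intro i r
      have hL : (∑ ℓ, if ρ i ℓ ≤ r then (1:ℚ) else 0)
          = ((Finset.univ.filter (fun ℓ => ρ i ℓ ≤ r)).card : ℚ) := by
        rw [Finset.sum_boole]
      have hR : (∑ c ∈ Finset.univ.filter (fun c => rank i c ≤ r),
          if c ∈ W then (1:ℚ) else 0)
          = ((W.filter (fun c => rank i c ≤ r)).card : ℚ) := by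
        rw [Finset.sum_boole]
        have : Finset.filter (fun a => rank i a ≤ r ∧ a ∈ W) Finset.univ
            = Finset.filter (fun c => rank i c ≤ r) W := by
          ext c
          simp [and_comm]
        rw [Finset.filter_filter, this]
      rw [hL, hR, card_filter_map_eq W (rank i) (ρ i) (hρmap i) r]
    · rw [hqval]
      apply Finset.sum_congr rfl; intro i _
      apply Finset.sum_congr rfl; intro ℓ _
      have : ∀ r : Fin m, α ℓ * w' r * (if ρ i ℓ ≤ r then (1:ℚ) else 0)
          = α ℓ * (if ρ i ℓ ≤ r then w' r else 0) := by
        intro r; by_cases h : ρ i ℓ ≤ r <;> simp [h]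
      rw [Finset.sum_congr rfl fun r _ => this r, ← Finset.mul_sum,
        telescope w w' hw' (ρ i ℓ)]
  -- upper bound on the LP values
  have hAub : ∀ val : ℚ, (∃ (y : Fin m → ℚ) (x : Fin n → Fin k → Fin m → ℚ),
      (∀ c, 0 ≤ y c ∧ y c ≤ 1) ∧
      (∀ i ℓ r, 0 ≤ x i ℓ r ∧ x i ℓ r ≤ 1) ∧
      (∑ c, y c) = (k : ℚ) ∧
      (∀ i r, (∑ ℓ, x i ℓ r) ≤
        ∑ c ∈ Finset.univ.filter (fun c => rank i c ≤ r), y c) ∧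
      val = ∑ i, ∑ ℓ, ∑ r, α ℓ * w' r * x i ℓ r) → val ≤ q := by
    rintro val ⟨y, x, hy, hx, hysum, hfeas, hveq⟩
    have hw'nn : ∀ r, 0 ≤ w' r := by
      intro r
      rw [hw' r]
      split
      · next h =>
        have := hwmono r ⟨(r:ℕ)+1, h⟩ (by simp [Fin.le_def])
        linarith
      · have := hwnonneg r
        linarith
    set g : ℚ → ℚ := fun s => ∑ ℓ : Fin k, α ℓ * clampQ (s - ((ℓ:ℕ):ℚ)) with hg
    set S : Fin n → Fin m → ℚ :=
      fun i r => ∑ c ∈ Finset.univ.filter (fun c => rank i c ≤ r), y c with hSdef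
    -- step 1 : bound by the greedy value
    have step1 : val ≤ ∑ i, ∑ r : Fin m, w' r * g (S i r) := by
      rw [hveq]
      apply Finset.sum_le_sum
      intro i _
      rw [Finset.sum_comm]
      apply Finset.sum_le_sum
      intro r _
      have : ∑ ℓ, α ℓ * w' r * x i ℓ r = w' r * ∑ ℓ, α ℓ * x i ℓ r := by
        rw [Finset.mul_sum]
        exact Finset.sum_congr rfl fun ℓ _ => by ring
      rw [this]
      exact mul_le_mul_of_nonneg_left
        (greedy_bound α hαmono hαnonneg (fun ℓ => x i ℓ r) (fun ℓ => hx i ℓ r)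
          (S i r) (hfeas i r)) (hw'nn r)
    -- intervals
    have hInt : ∀ i r, ∃ a b : ℕ, a ≤ b ∧ b ≤ m ∧
        ∀ c : Fin m, (rank i c ≤ r ↔ (a ≤ (pos c : ℕ) ∧ (pos c : ℕ) < b)) := by
      intro i r
      by_cases hne : (Finset.univ.filter (fun c => rank i c ≤ r)).Nonempty
      case neg =>
        refine ⟨0, 0, le_rfl, Nat.zero_le m, fun c => ?_⟩
        constructor
        · intro h
          exact absurd ⟨c, Finset.mem_filter.2 ⟨Finset.mem_univ c, h⟩⟩ hne
        · omega
      case pos =>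
        have hne2 : ((Finset.univ.filter (fun c => rank i c ≤ r)).image
            (fun c => (pos c : ℕ))).Nonempty := hne.image _
        set Timg := (Finset.univ.filter (fun c => rank i c ≤ r)).image
            (fun c => (pos c : ℕ)) with hTimg
        refine ⟨Timg.min' hne2, Timg.max' hne2 + 1, ?_, ?_, ?_⟩
        · have := Timg.min'_le _ (Timg.max'_mem hne2)
          omega
        · obtain ⟨cb, -, hcb⟩ := Finset.mem_image.1 (Timg.max'_mem hne2)
          omega
        · intro c
          constructor
          · intro hP
            have hc : (pos c : ℕ) ∈ Timg := Finset.mem_image.2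
              ⟨c, Finset.mem_filter.2 ⟨Finset.mem_univ c, hP⟩, rfl⟩
            exact ⟨Timg.min'_le _ hc, Nat.lt_succ_of_le (Timg.le_max' _ hc)⟩
          · rintro ⟨ha, hb⟩
            obtain ⟨ca, hca_mem, hca⟩ := Finset.mem_image.1 (Timg.min'_mem hne2)
            obtain ⟨cb, hcb_mem, hcb⟩ := Finset.mem_image.1 (Timg.max'_mem hne2)
            have hPa : rank i ca ≤ r := (Finset.mem_filter.1 hca_mem).2
            have hPb : rank i cb ≤ r := (Finset.mem_filter.1 hcb_mem).2
            rcases eq_or_lt_of_le ha with heq | hlt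
            · have : pos ca = pos c := Fin.ext (by omega)
              rwa [pos.injective this] at hPa
            · have hb' : (pos c : ℕ) ≤ Timg.max' hne2 := by omega
              rcases eq_or_lt_of_le hb' with heq2 | hlt2
              · have : pos cb = pos c := Fin.ext (by omega)
                rwa [pos.injective this] at hPb
              · exact hpos i r ca c cb (by rw [Fin.lt_def]; omega)
                  (by rw [Fin.lt_def]; omega) hPa hPb
    -- common denominator
    set D : ℕ := ∏ c, (y c).den with hD
    have hD0 : 0 < D := Finset.prod_pos fun c _ => (y c).pos
    have hyz : ∀ c, ∃ zc : ℤ, ((D:ℚ)) * y c = zc := by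
      intro c
      obtain ⟨t, ht⟩ := Finset.dvd_prod_of_mem (fun c => (y c).den) (Finset.mem_univ c)
      refine ⟨t * (y c).num, ?_⟩
      rw [← hD] at ht
      rw [ht]
      push_cast
      rw [mul_comm ((y c).den : ℚ) (t:ℚ), mul_assoc, Rat.den_mul_eq_num]
    choose zz hzz using hyz
    set z : ℕ → ℚ := fun j => if h : j < m then y (pos.symm ⟨j, h⟩) else 0 with hz
    set Q : ℕ → ℚ := fun j => ∑ t ∈ Finset.range j, z t with hQ
    have hz0 : ∀ j, 0 ≤ z j := by
      intro j; by_cases h : j < m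
      · simpa [hz, h] using (hy _).1
      · simp [hz, h]
    have hz1 : ∀ j, z j ≤ 1 := by
      intro j; by_cases h : j < m
      · simpa [hz, h] using (hy _).2
      · simp [hz, h]
    have hQstep : ∀ j, Q (j+1) = Q j + z j := fun j => Finset.sum_range_succ z j
    have hQ0 : Q 0 = 0 := by simp [hQ]
    have hQm : Q m = (k:ℚ) := by
      show ∑ t ∈ Finset.range m, z t = (k:ℚ)
      have h1 : ∑ t ∈ Finset.range m, z t = ∑ c : Fin m, y (pos.symm c) :=
        sum_ext_eq (fun c : Fin m => y (pos.symm c))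
      rw [h1, Equiv.sum_comp pos.symm y, hysum]
    have hQe : ∀ j, ∃ e : ℕ, ((e:ℚ)) = (D:ℚ) * Q j := by
      intro j
      set ez : ℕ → ℤ := fun jj => if h : jj < m then zz (pos.symm ⟨jj, h⟩) else 0 with hezdef
      have hez : ∀ jj, ((ez jj : ℤ) : ℚ) = (D:ℚ) * z jj := by
        intro jj
        by_cases h : jj < m
        · simp only [hezdef, hz, dif_pos h]
          exact (hzz _).symm
        · simp [hezdef, hz, dif_neg h]
      have hQj : Q j = ∑ tt ∈ Finset.range j, z tt := rfl
      have hsum : ((∑ tt ∈ Finset.range j, ez tt : ℤ) : ℚ) = (D:ℚ) * Q j := by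
        rw [hQj, Finset.mul_sum]
        push_cast
        exact Finset.sum_congr rfl fun tt _ => hez tt
      have hQnn : 0 ≤ Q j := Finset.sum_nonneg fun tt _ => hz0 tt
      have hnn : 0 ≤ ∑ tt ∈ Finset.range j, ez tt := by
        have h2 : (0:ℚ) ≤ ((∑ tt ∈ Finset.range j, ez tt : ℤ) : ℚ) := by
          rw [hsum]
          have : (0:ℚ) ≤ (D:ℚ) := by positivity
          exact mul_nonneg this hQnn
        exact_mod_cast h2
      refine ⟨(∑ tt ∈ Finset.range j, ez tt).toNat, ?_⟩
      have h3 : (((∑ tt ∈ Finset.range j, ez tt).toNat : ℕ) : ℤ)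
          = ∑ tt ∈ Finset.range j, ez tt := Int.toNat_of_nonneg hnn
      calc (((∑ tt ∈ Finset.range j, ez tt).toNat : ℕ) : ℚ)
          = ((((∑ tt ∈ Finset.range j, ez tt).toNat : ℕ) : ℤ) : ℚ) := by push_cast; ring
        _ = ((∑ tt ∈ Finset.range j, ez tt : ℤ) : ℚ) := by rw [h3]
        _ = (D:ℚ) * Q j := hsum
    set N : ℕ → ℚ → ℤ := fun t s => ⌊s + 1 - ((t:ℚ)+1)/(D:ℚ)⌋ with hN
    have hNmono : ∀ t (s s' : ℚ), s ≤ s' → N t s ≤ N t s' := by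
      intro t s s' h
      exact Int.floor_le_floor (by linarith)
    set d : ℕ → ℕ → ℤ := fun t j => N t (Q (j+1)) - N t (Q j) with hdd
    have hd01 : ∀ t j, d t j = 0 ∨ d t j = 1 := by
      intro t j
      have h1 : N t (Q j) ≤ N t (Q (j+1)) := hNmono t _ _ (by rw [hQstep]; linarith [hz0 j])
      have h2 : N t (Q (j+1)) ≤ N t (Q j) + 1 := by
        have : Q (j+1) + 1 - ((t:ℚ)+1)/(D:ℚ) ≤ (Q j + 1 - ((t:ℚ)+1)/(D:ℚ)) + 1 := by
          rw [hQstep]; linarith [hz1 j]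
        calc N t (Q (j+1)) ≤ ⌊(Q j + 1 - ((t:ℚ)+1)/(D:ℚ)) + 1⌋ := Int.floor_le_floor this
          _ = N t (Q j) + 1 := by rw [Int.floor_add_one]
      have hde : d t j = N t (Q (j+1)) - N t (Q j) := rfl
      rw [hde]
      omega
    -- the counting lemma
    have hcount : ∀ (t : ℕ) (T : Finset (Fin m)) (a b : ℕ), a ≤ b → b ≤ m →
        (∀ c : Fin m, c ∈ T ↔ (a ≤ (pos c : ℕ) ∧ (pos c : ℕ) < b)) →
        (((T.filter (fun c => d t (pos c) = 1)).card : ℤ) = N t (Q b) - N t (Q a)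
          ∧ ∑ c ∈ T, y c = Q b - Q a) := by
      intro t T a b hab hbm hchar
      have himg : Finset.Ico a b = T.image (fun c => (pos c : ℕ)) := by
        ext j
        simp only [Finset.mem_Ico, Finset.mem_image]
        constructor
        · rintro ⟨hja, hjb⟩
          have hjm : j < m := lt_of_lt_of_le hjb hbm
          refine ⟨pos.symm ⟨j, hjm⟩, ?_, by simp⟩
          rw [hchar]
          simp [hja, hjb]
        · rintro ⟨c, hc, rfl⟩
          exact (hchar c).1 hc
      have hinj : ∀ c ∈ T, ∀ c' ∈ T, (pos c : ℕ) = (pos c' : ℕ) → c = c' :=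
        fun c _ c' _ h => pos.injective (Fin.ext h)
      have hzy : ∀ c : Fin m, z ((pos c : ℕ)) = y c := by
        intro c
        simp only [hz, dif_pos (pos c).isLt]
        congr 1
        rw [show (⟨((pos c) : ℕ), (pos c).isLt⟩ : Fin m) = pos c from Fin.eta _ _]
        exact pos.symm_apply_apply c
      have hyT : ∑ c ∈ T, y c = Q b - Q a := by
        have h1 : ∑ j ∈ Finset.Ico a b, z j = ∑ c ∈ T, y c := by
          rw [himg, Finset.sum_image hinj]
          exact Finset.sum_congr rfl fun c _ => hzy c
        rw [← h1, Finset.sum_Ico_eq_sub z hab]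
      refine ⟨?_, hyT⟩
      have h2 : ((T.filter (fun c => d t (pos c) = 1)).card : ℤ)
          = ∑ c ∈ T, (if d t (pos c) = 1 then (1:ℤ) else 0) := (Finset.sum_boole _ _).symm
      have h3 : ∑ c ∈ T, (if d t (pos c) = 1 then (1:ℤ) else 0)
          = ∑ j ∈ Finset.Ico a b, (if d t j = 1 then (1:ℤ) else 0) := by
        rw [himg, Finset.sum_image hinj]
      have h4 : ∑ j ∈ Finset.Ico a b, (if d t j = 1 then (1:ℤ) else 0)
          = ∑ j ∈ Finset.Ico a b, d t j := by
        apply Finset.sum_congr rfl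
        intro j _
        rcases hd01 t j with h | h <;> simp [h]
      have h5 : ∑ j ∈ Finset.Ico a b, d t j = N t (Q b) - N t (Q a) := by
        rw [Finset.sum_Ico_eq_sum_range]
        have hstep : ∀ i, d t (a + i)
            = (fun i => N t (Q (a + i))) (i+1) - (fun i => N t (Q (a + i))) i := fun i => rfl
        rw [Finset.sum_congr rfl fun i _ => hstep i,
          Finset.sum_range_sub (fun i => N t (Q (a + i))) (b - a)]
        have : a + (b - a) = b := by omega
        rw [this]
        simp
      rw [h2, h3, h4, h5]
    have hθ : ∀ t, t < D → 0 < ((t:ℚ)+1)/(D:ℚ) ∧ ((t:ℚ)+1)/(D:ℚ) ≤ 1 := by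
      intro t ht
      have hDQ : (0:ℚ) < D := by exact_mod_cast hD0
      constructor
      · positivity
      · rw [div_le_one hDQ]
        exact_mod_cast ht
    have hNQm : ∀ t, t < D → N t (Q m) = (k:ℤ) := by
      intro t ht
      obtain ⟨h1, h2⟩ := hθ t ht
      show ⌊Q m + 1 - ((t:ℚ)+1)/(D:ℚ)⌋ = (k:ℤ)
      rw [hQm, Int.floor_eq_iff]
      push_cast
      constructor <;> linarith
    have hNQ0 : ∀ t, t < D → N t (Q 0) = 0 := by
      intro t ht
      obtain ⟨h1, h2⟩ := hθ t ht
      show ⌊Q 0 + 1 - ((t:ℚ)+1)/(D:ℚ)⌋ = (0:ℤ)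
      rw [hQ0, Int.floor_eq_iff]
      push_cast
      constructor <;> linarith
    set Wc : ℕ → Finset (Fin m) :=
      fun t => Finset.univ.filter (fun c => d t (pos c) = 1) with hWc
    have hWtcard : ∀ t, t < D → (Wc t).card = k := by
      intro t ht
      have := (hcount t Finset.univ 0 m (Nat.zero_le m) le_rfl
        (fun c => by simp [(pos c).isLt])).1
      rw [hNQm t ht, hNQ0 t ht, sub_zero] at this
      exact_mod_cast this
    -- average identity
    have havg : ∀ i r, ∑ t ∈ Finset.range D,
        g ((((Wc t).filter (fun c => rank i c ≤ r)).card : ℚ)) = (D:ℚ) * g (S i r) := by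
      intro i r
      obtain ⟨a, b, hab, hbm, hchar⟩ := hInt i r
      set cq : ℕ → ℚ :=
        fun t => ((((Wc t).filter (fun c => rank i c ≤ r)).card : ℕ) : ℚ) with hcqdef
      have hTchar : ∀ c : Fin m, c ∈ Finset.univ.filter (fun c => rank i c ≤ r)
          ↔ (a ≤ (pos c:ℕ) ∧ (pos c:ℕ) < b) := by
        intro c
        rw [Finset.mem_filter]
        constructor
        · rintro ⟨-, h⟩; exact (hchar c).1 h
        · intro h; exact ⟨Finset.mem_univ c, (hchar c).2 h⟩
      have hSir : S i r = Q b - Q a := (hcount 0 _ a b hab hbm hTchar).2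
      have hcnt : ∀ t : ℕ, ((Wc t).filter (fun c => rank i c ≤ r))
          = ((Finset.univ.filter (fun c => rank i c ≤ r)).filter
              (fun c => d t (pos c) = 1)) := by
        intro t
        ext c
        simp only [hWc, Finset.mem_filter, Finset.mem_univ, true_and]
        tauto
      have hcntZ : ∀ t : ℕ, ((((Wc t).filter (fun c => rank i c ≤ r)).card : ℤ))
          = N t (Q b) - N t (Q a) := by
        intro t
        rw [hcnt t]
        exact (hcount t _ a b hab hbm hTchar).1
      obtain ⟨ea, hea⟩ := hQe a
      obtain ⟨eb, heb⟩ := hQe b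
      have hNa : ∑ t ∈ Finset.range D, N t (Q a) = (ea:ℤ) := floor_avg D hD0 (Q a) ea hea
      have hNb : ∑ t ∈ Finset.range D, N t (Q b) = (eb:ℤ) := floor_avg D hD0 (Q b) eb heb
      have hsum_cnt : ∑ t ∈ Finset.range D, cq t = (D:ℚ) * S i r := by
        have h1 : ∑ t ∈ Finset.range D, (N t (Q b) - N t (Q a)) = (eb:ℤ) - (ea:ℤ) := by
          rw [Finset.sum_sub_distrib, hNa, hNb]
        calc ∑ t ∈ Finset.range D, cq t
            = ∑ t ∈ Finset.range D, (((N t (Q b) - N t (Q a) : ℤ)):ℚ) := by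
              apply Finset.sum_congr rfl; intro t _
              rw [hcqdef, ← hcntZ t]
              push_cast
              ring
          _ = (((eb:ℤ) - (ea:ℤ) : ℤ):ℚ) := by rw [← h1]; push_cast; ring
          _ = (D:ℚ) * S i r := by rw [hSir]; push_cast; linarith [hea, heb]
      set f : ℤ := ⌊S i r⌋ with hfdef
      have hfS1 : (f:ℚ) ≤ S i r := Int.floor_le _
      have hfS2 : S i r ≤ (f:ℚ) + 1 := le_of_lt (Int.lt_floor_add_one _)
      have hbound : ∀ t, t < D → (f:ℚ) ≤ cq t ∧ cq t ≤ (f:ℚ) + 1 := by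
        intro t ht
        obtain ⟨hθ1, hθ2⟩ := hθ t ht
        have hcq2 : cq t = ((N t (Q b) - N t (Q a) : ℤ):ℚ) := by
          rw [hcqdef, ← hcntZ t]
          push_cast
          ring
        have hub_b : ((N t (Q b)):ℚ) ≤ Q b + 1 - ((t:ℚ)+1)/(D:ℚ) := Int.floor_le _
        have hlb_b : Q b + 1 - ((t:ℚ)+1)/(D:ℚ) < ((N t (Q b)):ℚ) + 1 :=
          Int.lt_floor_add_one _
        have hub_a : ((N t (Q a)):ℚ) ≤ Q a + 1 - ((t:ℚ)+1)/(D:ℚ) := Int.floor_le _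
        have hlb_a : Q a + 1 - ((t:ℚ)+1)/(D:ℚ) < ((N t (Q a)):ℚ) + 1 :=
          Int.lt_floor_add_one _
        have h1 : cq t < S i r + 1 := by
          rw [hcq2, hSir]
          push_cast
          linarith
        have h2 : S i r - 1 < cq t := by
          rw [hcq2, hSir]
          push_cast
          linarith
        have hz1 : (f:ℚ) - 1 < cq t := by linarith
        have hz2 : cq t < (f:ℚ) + 2 := by linarith
        have hc1 : f - 1 < ((N t (Q b) - N t (Q a) : ℤ)) := by
          rw [hcq2] at hz1
          exact_mod_cast hz1
        have hc2 : ((N t (Q b) - N t (Q a) : ℤ)) < f + 2 := by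
          rw [hcq2] at hz2
          exact_mod_cast hz2
        constructor
        · rw [hcq2]
          have : f ≤ (N t (Q b) - N t (Q a) : ℤ) := by omega
          exact_mod_cast this
        · rw [hcq2]
          have : (N t (Q b) - N t (Q a) : ℤ) ≤ f + 1 := by omega
          exact_mod_cast this
      have hgS : ∀ ℓ : Fin k, ∑ t ∈ Finset.range D, clampQ (cq t - ((ℓ:ℕ):ℚ))
          = (D:ℚ) * clampQ (S i r - ((ℓ:ℕ):ℚ)) := by
        intro ℓ
        obtain ⟨A, B, hAB⟩ := clampQ_affine f ((ℓ:ℕ):ℤ)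
        have hAB' : ∀ s : ℚ, (f:ℚ) ≤ s → s ≤ (f:ℚ)+1 →
            clampQ (s - ((ℓ:ℕ):ℚ)) = A + B * s := by
          intro s h1 h2
          have := hAB s h1 h2
          rwa [show ((((ℓ:ℕ):ℤ)):ℚ) = ((ℓ:ℕ):ℚ) from by push_cast; ring] at this
        calc ∑ t ∈ Finset.range D, clampQ (cq t - ((ℓ:ℕ):ℚ))
            = ∑ t ∈ Finset.range D, (A + B * cq t) := by
              apply Finset.sum_congr rfl; intro t ht
              rw [Finset.mem_range] at ht
              exact hAB' _ (hbound t ht).1 (hbound t ht).2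
          _ = (D:ℚ) * A + B * ∑ t ∈ Finset.range D, cq t := by
              rw [Finset.sum_add_distrib, Finset.sum_const, Finset.card_range,
                nsmul_eq_mul, ← Finset.mul_sum]
          _ = (D:ℚ) * A + B * ((D:ℚ) * S i r) := by rw [hsum_cnt]
          _ = (D:ℚ) * (A + B * S i r) := by ring
          _ = (D:ℚ) * clampQ (S i r - ((ℓ:ℕ):ℚ)) := by rw [hAB' (S i r) hfS1 hfS2]
      have hgapp : ∀ s : ℚ, g s = ∑ ℓ : Fin k, α ℓ * clampQ (s - ((ℓ:ℕ):ℚ)) := fun s => rfl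
      calc ∑ t ∈ Finset.range D, g (cq t)
          = ∑ t ∈ Finset.range D, ∑ ℓ : Fin k, α ℓ * clampQ (cq t - ((ℓ:ℕ):ℚ)) :=
            Finset.sum_congr rfl fun t _ => hgapp (cq t)
        _ = ∑ ℓ : Fin k, ∑ t ∈ Finset.range D, α ℓ * clampQ (cq t - ((ℓ:ℕ):ℚ)) :=
            Finset.sum_comm
        _ = ∑ ℓ : Fin k, α ℓ * ((D:ℚ) * clampQ (S i r - ((ℓ:ℕ):ℚ))) := by
            apply Finset.sum_congr rfl; intro ℓ _
            rw [← Finset.mul_sum, hgS ℓ]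
        _ = (D:ℚ) * ∑ ℓ : Fin k, α ℓ * clampQ (S i r - ((ℓ:ℕ):ℚ)) := by
            rw [Finset.mul_sum]
            apply Finset.sum_congr rfl; intro ℓ _
            ring
        _ = (D:ℚ) * g (S i r) := by rw [← hgapp (S i r)]
    -- a good committee exists
    have hex : ∃ t ∈ Finset.range D, val ≤ ∑ i, ∑ r : Fin m,
        w' r * g ((((Wc t).filter (fun c => rank i c ≤ r)).card : ℚ)) := by
      apply Finset.exists_le_of_sum_le (Finset.nonempty_range_iff.2 hD0.ne')
      have hswap : ∑ t ∈ Finset.range D, ∑ i, ∑ r : Fin m,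
          w' r * g ((((Wc t).filter (fun c => rank i c ≤ r)).card : ℚ))
          = ∑ i, ∑ r : Fin m, w' r * ((D:ℚ) * g (S i r)) := by
        rw [Finset.sum_comm]
        apply Finset.sum_congr rfl; intro i _
        rw [Finset.sum_comm]
        apply Finset.sum_congr rfl; intro r _
        rw [← Finset.mul_sum, havg i r]
      rw [hswap, Finset.sum_const, Finset.card_range, nsmul_eq_mul]
      have : ∑ i, ∑ r : Fin m, w' r * ((D:ℚ) * g (S i r))
          = (D:ℚ) * ∑ i, ∑ r : Fin m, w' r * g (S i r) := by
        rw [Finset.mul_sum]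
        apply Finset.sum_congr rfl; intro i _
        rw [Finset.mul_sum]
        apply Finset.sum_congr rfl; intro r _
        ring
      rw [this]
      have hDQ : (0:ℚ) ≤ D := by positivity
      exact mul_le_mul_of_nonneg_left step1 hDQ
    obtain ⟨t, htD, hvt⟩ := hex
    rw [Finset.mem_range] at htD
    -- the committee value of `Wc t` is in Bset
    obtain ⟨ρ, hρ1, hρ2⟩ := hBstruct (Wc t) (hWtcard t htD)
    have hmem : (∑ i, ∑ ℓ, α ℓ * w (ρ i ℓ)) ∈ Bset :=
      ⟨Wc t, ρ, hWtcard t htD, hρ1, hρ2, rfl⟩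
    have : val ≤ ∑ i, ∑ ℓ, α ℓ * w (ρ i ℓ) := by
      rw [commit (Wc t) ρ hρ1 hρ2]
      exact hvt
    exact le_trans this (hqub _ hmem)
  refine ⟨q, ⟨?_, hAub⟩, hqint, hqmem, hqub⟩
  · obtain ⟨y, x, hy01, hx01, hs, hf, hv⟩ := hqint
    exact ⟨y, x, fun c => by rcases hy01 c with h | h <;> simp [h],
      fun i ℓ r => by rcases hx01 i ℓ r with h | h <;> simp [h], hs, hf, hv⟩
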